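/- Additive separable structure of the value function under a randomized base policy (Lemma 4): let π be a randomized base policy on 𝒰. Suppose that for every (n,m) ∈ I there exist θ̂_{n,m} ∈ ℝ and V̂_{n,m} : {0,…,N_{n,m}} → ℝ satisfying, for all q ∈ {0,…,N_{n,m}}, θ̂_{n,m} + V̂_{n,m}(q) = Σ_{u∈𝒰} π(u)·[ g_{n,m}(q,u) + Σ_{A∈𝒜} P(A)·V̂_{n,m}(T_{n,m}(q,u,A_{n,m})) ]. Then θ̂ = Σ_{(n,m)∈I} θ̂_{n,m} and V̂(Q) = Σ_{(n,m)∈I} V̂_{n,m}(Q_{n,m}) satisfy, for all Q ∈ 𝒬, θ̂ + V̂(Q) = Σ_{u∈𝒰} π(u)·[ g(Q,u) + Σ_{A∈𝒜} P(A)·V̂(T(Q,u,A)) ]. -/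

import Mathlib

open Finset

namespace HetNet

/-- The queue index set `I = {(n,m) : 0 ≤ n ≤ N, m ∈ M_n}`. -/
abbrev Idx {N M : ℕ} (cache : Fin (N + 1) → Finset (Fin M)) : Type :=
  {p : Fin (N + 1) × Fin M // p.2 ∈ cache p.1}

/-- The feasible action space `𝒰`: each BS schedules a cached content or idles (`none`),
and the MBS (BS `0`) and the SBSs do not operate concurrently. -/
def Feasible {N M : ℕ} (cache : Fin (N + 1) → Finset (Fin M))
    (u : Fin (N + 1) → Option (Fin M)) : Prop :=
  (∀ n m, u n = some m → m ∈ cache n) ∧ (u 0 ≠ none → ∀ n, n ≠ 0 → u n = none)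

instance {N M : ℕ} (cache : Fin (N + 1) → Finset (Fin M)) :
    DecidablePred (Feasible cache) := by
  intro u; unfold Feasible; infer_instance

instance {N M : ℕ} (cache : Fin (N + 1) → Finset (Fin M)) :
    Nonempty {u : Fin (N + 1) → Option (Fin M) // Feasible cache u} :=
  ⟨⟨fun _ => none, fun _ _ h => absurd h.symm (Option.some_ne_none _), fun h => absurd rfl h⟩⟩

/-- Queue `(n,m)` is served by action `u`. -/
def Served {N M : ℕ} (u : Fin (N + 1) → Option (Fin M)) (n : Fin (N + 1)) (m : Fin M) : Prop :=
  (n = 0 ∧ u 0 = some m) ∨ (n ≠ 0 ∧ (u 0 = some m ∨ u n = some m))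

instance {N M : ℕ} (u : Fin (N + 1) → Option (Fin M)) (n : Fin (N + 1)) (m : Fin M) :
    Decidable (Served u n m) := by unfold Served; infer_instance

/-- The queue transition map `T(Q,u,A)`. -/
def T {N M : ℕ} {cache : Fin (N + 1) → Finset (Fin M)} (bound : Idx cache → ℕ)
    (Q : Idx cache → ℕ) (u : Fin (N + 1) → Option (Fin M)) (A : Idx cache → ℕ) :
    Idx cache → ℕ := fun i =>
  if Served u i.val.1 i.val.2 then min (A i) (bound i) else min (Q i + A i) (bound i)

/-- The network power cost `p(u) = Σ_n p(n, u_n)` (with `p(n,0) = 0` for an idling BS). -/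
def pcost {N M : ℕ} (p : Fin (N + 1) → Fin M → ℝ) (u : Fin (N + 1) → Option (Fin M)) : ℝ :=
  ∑ n, (u n).elim 0 (p n)

/-- The sum request queue length `d(Q)`. -/
def dcost {N M : ℕ} {cache : Fin (N + 1) → Finset (Fin M)} (Q : Idx cache → ℕ) : ℝ :=
  ∑ i, (Q i : ℝ)

/-- The per-stage cost `g(Q,u) = d(Q) + w·p(u)`. -/
def gcost {N M : ℕ} (p : Fin (N + 1) → Fin M → ℝ) (w : ℝ)
    {cache : Fin (N + 1) → Finset (Fin M)}
    (Q : Idx cache → ℕ) (u : Fin (N + 1) → Option (Fin M)) : ℝ :=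
  dcost Q + w * pcost p u

/-- The state-action cost `J_V(Q,u) = g(Q,u) + Σ_{A∈𝒜} P(A)·V(T(Q,u,A))`. -/
def Jcost {N M : ℕ} (p : Fin (N + 1) → Fin M → ℝ) (w : ℝ)
    {cache : Fin (N + 1) → Finset (Fin M)} (bound : Idx cache → ℕ)
    {ι : Type} [Fintype ι] (P : ι → ℝ) (A : ι → Idx cache → ℕ)
    (V : (Idx cache → ℕ) → ℝ) (Q : Idx cache → ℕ)
    (u : Fin (N + 1) → Option (Fin M)) : ℝ :=
  gcost p w Q u + ∑ a, P a * V (T bound Q u (A a))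

/-- The per-queue transition map `T_{n,m}(q,u,a)`. -/
def Tq {N M : ℕ} {cache : Fin (N + 1) → Finset (Fin M)} (bound : Idx cache → ℕ)
    (i : Idx cache) (q : ℕ) (u : Fin (N + 1) → Option (Fin M)) (a : ℕ) : ℕ :=
  if Served u i.val.1 i.val.2 then min a (bound i) else min (q + a) (bound i)


lemma sum_ind_eq_pcost {N M : ℕ} (cache : Fin (N + 1) → Finset (Fin M))
    (p : Fin (N + 1) → Fin M → ℝ) (u : Fin (N + 1) → Option (Fin M))
    (hu : ∀ n m, u n = some m → m ∈ cache n) :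
    ∑ i : Idx cache, (if u i.val.1 = some i.val.2 then p i.val.1 i.val.2 else 0)
      = pcost p u := by
  rw [pcost]
  rw [← Finset.sum_subtype (Finset.univ.filter fun q : Fin (N + 1) × Fin M => q.2 ∈ cache q.1)
      (by simp) (fun q => if u q.1 = some q.2 then p q.1 q.2 else 0)]
  rw [Finset.sum_filter, Fintype.sum_prod_type]
  refine Finset.sum_congr rfl fun n _ => ?_
  cases hn : u n with
  | none => simp [hn]
  | some m0 =>
    have hm0 := hu n m0 hn
    simp only [hn, Option.elim]
    rw [show (∑ m : Fin M, if m ∈ cache n then if some m0 = some m then p n m else 0 else 0)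
        = ∑ m : Fin M, if m = m0 then p n m else 0 from
      Finset.sum_congr rfl fun m _ => by
        by_cases h : m = m0
        · simp [h, hm0]
        · simp [h, Ne.symm h]]
    simp

/-- Lemma 4: additive separable structure of the value function under a
randomized base policy `π`: if for every `(n,m) ∈ I` there are `θ̂_{n,m}` and `V̂_{n,m}`
solving the per-BS-content fixed point equation, then `θ̂ = Σ θ̂_{n,m}` and
`V̂(Q) = Σ V̂_{n,m}(Q_{n,m})` solve the corresponding fixed point equation of `π` on `𝒬`. -/
theorem additive_separable_structure {N M : ℕ} (cache : Fin (N + 1) → Finset (Fin M))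
    (hcache0 : ∀ m : Fin M, m ∈ cache 0)
    (bound : Idx cache → ℕ)
    (p : Fin (N + 1) → Fin M → ℝ) (hp : ∀ n m, 0 ≤ p n m)
    (w : ℝ) (hw : 0 ≤ w)
    {ι : Type} [Fintype ι] (P : ι → ℝ) (A : ι → Idx cache → ℕ)
    (hP : ∀ a, 0 ≤ P a) (hPsum : ∑ a, P a = 1)
    (π : {u : Fin (N + 1) → Option (Fin M) // Feasible cache u} → ℝ)
    (hπ : ∀ u, 0 ≤ π u) (hπsum : ∑ u, π u = 1)
    (θv : Idx cache → ℝ) (Vv : (i : Idx cache) → ℕ → ℝ)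
    (hper : ∀ i : Idx cache, ∀ q ≤ bound i,
      θv i + Vv i q =
        ∑ u : {u : Fin (N + 1) → Option (Fin M) // Feasible cache u}, π u *
          (((q : ℝ) + w * (if u.val i.val.1 = some i.val.2 then p i.val.1 i.val.2 else 0)) +
            ∑ a, P a * Vv i (Tq bound i q u.val (A a i)))) :
    ∀ Q : Idx cache → ℕ, (∀ i, Q i ≤ bound i) →
      (∑ i, θv i) + (∑ i, Vv i (Q i)) =
        ∑ u : {u : Fin (N + 1) → Option (Fin M) // Feasible cache u}, π u *
          (gcost p w Q u.val + ∑ a, P a * ∑ i, Vv i (T bound Q u.val (A a) i)) := by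
  intro Q hQ
  have key : ∀ i : Idx cache, θv i + Vv i (Q i) =
      ∑ u : {u : Fin (N + 1) → Option (Fin M) // Feasible cache u}, π u *
        (((Q i : ℝ) + w * (if u.val i.val.1 = some i.val.2 then p i.val.1 i.val.2 else 0)) +
          ∑ a, P a * Vv i (Tq bound i (Q i) u.val (A a i))) :=
    fun i => hper i (Q i) (hQ i)
  calc (∑ i, θv i) + (∑ i, Vv i (Q i)) = ∑ i, (θv i + Vv i (Q i)) := by
        rw [Finset.sum_add_distrib]
    _ = ∑ i, ∑ u : {u : Fin (N + 1) → Option (Fin M) // Feasible cache u}, π u *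
          (((Q i : ℝ) + w * (if u.val i.val.1 = some i.val.2 then p i.val.1 i.val.2 else 0)) +
            ∑ a, P a * Vv i (Tq bound i (Q i) u.val (A a i))) :=
        Finset.sum_congr rfl fun i _ => key i
    _ = ∑ u : {u : Fin (N + 1) → Option (Fin M) // Feasible cache u}, ∑ i, π u *
          (((Q i : ℝ) + w * (if u.val i.val.1 = some i.val.2 then p i.val.1 i.val.2 else 0)) +
            ∑ a, P a * Vv i (Tq bound i (Q i) u.val (A a i))) := Finset.sum_comm
    _ = ∑ u : {u : Fin (N + 1) → Option (Fin M) // Feasible cache u}, π u *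
          (gcost p w Q u.val + ∑ a, P a * ∑ i, Vv i (T bound Q u.val (A a) i)) := by
        refine Finset.sum_congr rfl fun u _ => ?_
        rw [← Finset.mul_sum]
        congr 1
        rw [Finset.sum_add_distrib, Finset.sum_add_distrib, Finset.sum_comm]
        have h1 : ∑ i : Idx cache, w * (if u.val i.val.1 = some i.val.2
            then p i.val.1 i.val.2 else 0) = w * pcost p u.val := by
          rw [← Finset.mul_sum, sum_ind_eq_pcost cache p u.val u.property.1]
        have h2 : ∀ a, ∑ i : Idx cache, P a * Vv i (Tq bound i (Q i) u.val (A a i))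
            = P a * ∑ i, Vv i (T bound Q u.val (A a) i) := fun a => by
          rw [← Finset.mul_sum]; rfl
        rw [h1, Finset.sum_congr rfl fun a _ => h2 a]
        rfl


end HetNet
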